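/- Let k ≥ 2 be an even integer and let D be the open unit disk in ℝ². For every smooth function ζ : ℝ² → ℝ with compact support contained in D, one has ∫_D |∇ζ(x)|² dx ≥ ∫_D (2k² |x|^{k−2}/(1 + |x|^k)²) ζ(x)² dx. -/

import Mathlib

noncomputable section

open MeasureTheory

namespace LdGStmt11

variable (p : ℕ)

def G (t : ℝ) : ℝ := (1 - t ^ (p + 1)) / (1 + t ^ (p + 1))

def G1 (t : ℝ) : ℝ := (-(2 * ((p : ℝ) + 1)) * t ^ p) / (1 + t ^ (p + 1)) ^ 2

def G2 (t : ℝ) : ℝ :=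
  ((-(2 * ((p : ℝ) + 1)) * ((p : ℝ) * t ^ (p - 1))) * (1 + t ^ (p + 1)) ^ 2
    - (-(2 * ((p : ℝ) + 1)) * t ^ p) * (2 * (1 + t ^ (p + 1)) * (((p : ℝ) + 1) * t ^ p)))
  / ((1 + t ^ (p + 1)) ^ 2) ^ 2

lemma one_add_pow_pos {t : ℝ} (ht : 0 ≤ t) : 0 < 1 + t ^ (p + 1) := by positivity

lemma hasDerivAt_G {t : ℝ} (ht : 0 ≤ t) : HasDerivAt (G p) (G1 p t) t := by
  have hden : (1 : ℝ) + t ^ (p + 1) ≠ 0 := (one_add_pow_pos p ht).ne'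
  have hpow : HasDerivAt (fun t : ℝ => t ^ (p + 1)) (((p : ℝ) + 1) * t ^ p) t := by
    simpa using hasDerivAt_pow (p + 1) t
  have hnum : HasDerivAt (fun t : ℝ => 1 - t ^ (p + 1)) (0 - ((p : ℝ) + 1) * t ^ p) t :=
    (hasDerivAt_const t (1:ℝ)).sub hpow
  have hden' : HasDerivAt (fun t : ℝ => 1 + t ^ (p + 1)) (0 + ((p : ℝ) + 1) * t ^ p) t :=
    (hasDerivAt_const t (1:ℝ)).add hpow
  have := hnum.div hden' hden
  refine this.congr_deriv ?_
  unfold G1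
  field_simp
  ring

lemma hasDerivAt_G1 {t : ℝ} (ht : 0 ≤ t) : HasDerivAt (G1 p) (G2 p t) t := by
  have hden : ((1 : ℝ) + t ^ (p + 1)) ^ 2 ≠ 0 := by positivity
  have hpow : HasDerivAt (fun t : ℝ => t ^ (p + 1)) (((p : ℝ) + 1) * t ^ p) t := by
    simpa using hasDerivAt_pow (p + 1) t
  have hnum : HasDerivAt (fun t : ℝ => -(2 * ((p : ℝ) + 1)) * t ^ p)
      (-(2 * ((p : ℝ) + 1)) * ((p : ℝ) * t ^ (p - 1))) t :=
    (hasDerivAt_pow p t).const_mul _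
  have hden' : HasDerivAt (fun t : ℝ => ((1 : ℝ) + t ^ (p + 1)) ^ 2)
      (2 * (1 + t ^ (p + 1)) * (((p : ℝ) + 1) * t ^ p)) t := by
    have := ((hasDerivAt_const t (1:ℝ)).add hpow).pow 2
    refine this.congr_deriv ?_
    push_cast [Pi.add_apply]
    ring
  exact hnum.div hden' hden

lemma mul_pow_pred (t : ℝ) : (p : ℝ) * t ^ (p - 1) * t = (p : ℝ) * t ^ p := by
  cases p with
  | zero => simp
  | succ n => rw [Nat.add_sub_cancel]; push_cast; ring

lemma t_mul_G2 (t : ℝ) : t * G2 p t =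
    ((-(2 * ((p : ℝ) + 1)) * ((p : ℝ) * t ^ p)) * (1 + t ^ (p + 1)) ^ 2
      - (-(2 * ((p : ℝ) + 1)) * t ^ p) * (2 * (1 + t ^ (p + 1)) * (((p : ℝ) + 1) * (t ^ p * t))))
    / ((1 + t ^ (p + 1)) ^ 2) ^ 2 := by
  unfold G2
  rw [← mul_div_assoc]
  congr 1
  linear_combination (-(2 * ((p : ℝ) + 1)) * (1 + t ^ (p + 1)) ^ 2) * mul_pow_pred p t

lemma laplace_identity {t : ℝ} (ht : 0 ≤ t) :
    4 * (t * G2 p t) + 4 * G1 p t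
      = -(8 * ((p : ℝ) + 1) ^ 2 * t ^ p / (1 + t ^ (p + 1)) ^ 2) * G p t := by
  have hs : (0:ℝ) < 1 + t ^ (p + 1) := one_add_pow_pos p ht
  rw [t_mul_G2]
  unfold G G1
  have h1 : (1:ℝ) + t ^ (p + 1) ≠ 0 := hs.ne'
  field_simp
  ring

/-! ### 2D setup -/

abbrev E2 := EuclideanSpace ℝ (Fin 2)

def q (x : E2) : ℝ := ∑ i, x i ^ 2

def L (x : E2) : E2 →L[ℝ] ℝ := ∑ i, ((2 : ℝ) * x i ^ 1) • EuclideanSpace.proj i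

lemma q_nonneg (x : E2) : 0 ≤ q x := Finset.sum_nonneg fun i _ => sq_nonneg _

lemma q_eq_norm (x : E2) : q x = ‖x‖ ^ 2 := by
  rw [EuclideanSpace.norm_eq, Real.sq_sqrt (by positivity)]
  simp [q, Real.norm_eq_abs, sq_abs]

lemma hasFDerivAt_q (x : E2) : HasFDerivAt q (L x) x := by
  apply HasFDerivAt.fun_sum
  intro i _
  exact (hasDerivAt_pow 2 (x i)).comp_hasFDerivAt x
    ((EuclideanSpace.proj i : E2 →L[ℝ] ℝ).hasFDerivAt (x := x))

lemma contDiff_q : ContDiff ℝ (⊤ : ℕ∞) q :=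
  ContDiff.sum fun i _ => ((EuclideanSpace.proj i : E2 →L[ℝ] ℝ).contDiff).pow 2

lemma continuous_q : Continuous q := contDiff_q.continuous

lemma L_apply (x v : E2) : L x v = ∑ i, 2 * x i * v i := by
  simp [L, pow_one]

lemma single_apply (i j : Fin 2) : (EuclideanSpace.single i (1:ℝ)) j = if j = i then 1 else 0 :=
  EuclideanSpace.single_apply i 1 j

lemma L_apply_single (x : E2) (i : Fin 2) : L x (EuclideanSpace.single i 1) = 2 * x i := by
  rw [L_apply]
  rw [Finset.sum_eq_single i]
  · simp [single_apply]
  · intro j _ hj; simp [single_apply, hj]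
  · simp

def phi (x : E2) : ℝ := G p (q x)

def P (i : Fin 2) (x : E2) : ℝ := G1 p (q x) * (2 * x i)

lemma hasFDerivAt_phi (x : E2) : HasFDerivAt (phi p) (G1 p (q x) • L x) x :=
  (hasDerivAt_G p (q_nonneg x)).comp_hasFDerivAt x (hasFDerivAt_q x)

lemma hasFDerivAt_G1q (x : E2) :
    HasFDerivAt (fun y => G1 p (q y)) (G2 p (q x) • L x) x :=
  (hasDerivAt_G1 p (q_nonneg x)).comp_hasFDerivAt x (hasFDerivAt_q x)

lemma hasFDerivAt_P (i : Fin 2) (x : E2) :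
    HasFDerivAt (P p i) (G1 p (q x) • ((2:ℝ) • (EuclideanSpace.proj i : E2 →L[ℝ] ℝ))
      + (2 * x i) • (G2 p (q x) • L x)) x := by
  have h2 : HasFDerivAt (fun y : E2 => 2 * y i)
      ((2:ℝ) • (EuclideanSpace.proj i : E2 →L[ℝ] ℝ)) x :=
    ((EuclideanSpace.proj i : E2 →L[ℝ] ℝ).hasFDerivAt (x := x)).const_mul 2
  exact (hasFDerivAt_G1q p x).mul h2

lemma differentiable_P (i : Fin 2) : Differentiable ℝ (P p i) :=
  fun x => (hasFDerivAt_P p i x).differentiableAt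

lemma fderiv_P_single (i : Fin 2) (x : E2) :
    fderiv ℝ (P p i) x (EuclideanSpace.single i 1)
      = 2 * G1 p (q x) + (2 * x i) * (G2 p (q x) * (2 * x i)) := by
  rw [(hasFDerivAt_P p i x).fderiv]
  simp [L_apply_single, single_apply, smul_eq_mul]
  ring

lemma sum_fderiv_P (x : E2) :
    ∑ i, fderiv ℝ (P p i) x (EuclideanSpace.single i 1)
      = -(8 * ((p : ℝ) + 1) ^ 2 * (q x) ^ p / (1 + (q x) ^ (p + 1)) ^ 2) * phi p x := by
  unfold phi
  rw [← laplace_identity p (q_nonneg x)]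
  have : ∑ i, fderiv ℝ (P p i) x (EuclideanSpace.single i 1)
      = 4 * G1 p (q x) + (∑ i, (x i)^2) * (4 * G2 p (q x)) := by
    rw [Finset.sum_congr rfl fun i _ => fderiv_P_single p i x]
    rw [Fin.sum_univ_two, Fin.sum_univ_two]
    ring
  rw [this]
  show _ = 4 * (q x * G2 p (q x)) + 4 * G1 p (q x)
  unfold q
  ring

lemma phi_pos {x : E2} (hx : ‖x‖ < 1) : 0 < phi p x := by
  have h0 : 0 ≤ q x := q_nonneg x
  have h1 : q x < 1 := by
    rw [q_eq_norm]
    calc ‖x‖ ^ 2 ≤ ‖x‖ * 1 := by rw [sq]; exact mul_le_mul_of_nonneg_left hx.le (norm_nonneg x)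
    _ < 1 := by simpa using hx
  have h2 : q x ^ (p + 1) < 1 := pow_lt_one₀ h0 h1 (Nat.succ_ne_zero p)
  have h3 : 0 < 1 + q x ^ (p + 1) := one_add_pow_pos p h0
  unfold phi G
  apply div_pos (by linarith) h3

lemma contDiff_phi : ContDiff ℝ (⊤ : ℕ∞) (phi p) := by
  unfold phi G
  apply ContDiff.div
  · exact contDiff_const.sub (contDiff_q.pow (p+1))
  · exact contDiff_const.add (contDiff_q.pow (p+1))
  · exact fun x => (one_add_pow_pos p (q_nonneg x)).ne'

lemma continuous_G1q : Continuous fun x : E2 => G1 p (q x) := by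
  unfold G1
  apply Continuous.div
  · exact continuous_const.mul (continuous_q.pow p)
  · exact (continuous_const.add (continuous_q.pow (p+1))).pow 2
  · exact fun x => pow_ne_zero 2 (one_add_pow_pos p (q_nonneg x)).ne'

lemma continuous_G2q : Continuous fun x : E2 => G2 p (q x) := by
  unfold G2
  have hq : Continuous q := continuous_q
  apply Continuous.div
  · apply Continuous.sub
    · exact (continuous_const.mul (continuous_const.mul (hq.pow (p-1)))).mul
        ((continuous_const.add (hq.pow (p+1))).pow 2)
    · exact (continuous_const.mul (hq.pow p)).mul
        ((continuous_const.mul (continuous_const.add (hq.pow (p+1)))).mul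
          (continuous_const.mul (hq.pow p)))
  · exact ((continuous_const.add (hq.pow (p+1))).pow 2).pow 2
  · exact fun x => pow_ne_zero 2 (pow_ne_zero 2 (one_add_pow_pos p (q_nonneg x)).ne')

lemma continuous_P (i : Fin 2) : Continuous (P p i) := by
  unfold P
  exact (continuous_G1q p).mul
    (continuous_const.mul (EuclideanSpace.proj i : E2 →L[ℝ] ℝ).continuous)


/-! ### Main theorem -/

/-- Stability inequality for the minimizing harmonic map `n_*^+`: for even
`k ≥ 2` and every smooth `ζ : ℝ² → ℝ` with compact support in the unit disk `D`,
`∫_D |∇ζ|² dx ≥ ∫_D (2k²|x|^{k−2}/(1+|x|^k)²) ζ² dx`. -/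
theorem stmt_11 (k : ℕ) (hk : 2 ≤ k) (hke : Even k)
    (ζ : EuclideanSpace ℝ (Fin 2) → ℝ) (hζ : ContDiff ℝ (⊤ : ℕ∞) ζ)
    (hsupp : tsupport ζ ⊆ Metric.ball 0 1) :
    ∫ x in Metric.ball (0 : EuclideanSpace ℝ (Fin 2)) 1,
        ∑ i : Fin 2, (fderiv ℝ ζ x (EuclideanSpace.single i 1)) ^ 2
      ≥ ∫ x in Metric.ball (0 : EuclideanSpace ℝ (Fin 2)) 1,
          (2 * (k : ℝ) ^ 2 * ‖x‖ ^ (k - 2) / (1 + ‖x‖ ^ k) ^ 2) * (ζ x) ^ 2 := by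
  classical
  obtain ⟨a, ha⟩ := hke
  have ha1 : 1 ≤ a := by omega
  set p : ℕ := a - 1 with hp
  have hk2 : k = 2 * p + 2 := by omega
  have hζdiff : Differentiable ℝ ζ := hζ.differentiable (by simp)
  -- compact support of ζ
  have hcsζ : HasCompactSupport ζ :=
    Metric.isCompact_of_isClosed_isBounded (isClosed_tsupport ζ)
      (Metric.isBounded_ball.subset hsupp)
  set u : E2 → ℝ := fun x => ζ x ^ 2 / phi p x with hu_def
  have hu0 : ∀ x : E2, x ∉ tsupport ζ → u =ᶠ[nhds x] 0 := by
    intro x hx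
    filter_upwards [notMem_tsupport_iff_eventuallyEq.mp hx] with y hy
    simp [hu_def, hy]
  have hball_phi : ∀ x : E2, x ∈ Metric.ball (0 : E2) 1 → 0 < phi p x := by
    intro x hx
    exact phi_pos p (mem_ball_zero_iff.mp hx)
  have hnotball : ∀ x : E2, x ∉ Metric.ball (0 : E2) 1 → x ∉ tsupport ζ :=
    fun x hx h => hx (hsupp h)
  -- derivative of ζ^2
  have hz2 : ∀ x : E2, HasFDerivAt (fun y => ζ y ^ 2)
      ((↑2 * ζ x ^ (2 - 1)) • fderiv ℝ ζ x) x :=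
    fun x => (hasDerivAt_pow 2 (ζ x)).comp_hasFDerivAt x (hζdiff x).hasFDerivAt
  -- derivative of u at interior points
  have hueq : u = fun y => ζ y ^ 2 * (phi p y)⁻¹ := by
    funext y; exact div_eq_mul_inv _ _
  have hu_ball : ∀ x : E2, phi p x ≠ 0 → HasFDerivAt u
      (ζ x ^ 2 • ((-(phi p x ^ 2)⁻¹) • (G1 p (q x) • L x))
        + (phi p x)⁻¹ • ((↑2 * ζ x ^ (2 - 1)) • fderiv ℝ ζ x)) x := by
    intro x hx
    have hinv : HasFDerivAt (fun y => (phi p y)⁻¹)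
        ((-(phi p x ^ 2)⁻¹) • (G1 p (q x) • L x)) x :=
      (hasDerivAt_inv hx).comp_hasFDerivAt x (hasFDerivAt_phi p x)
    rw [hueq]
    exact (hz2 x).mul hinv
  have hu_diff : Differentiable ℝ u := by
    intro x
    by_cases hx : x ∈ Metric.ball (0 : E2) 1
    · exact (hu_ball x (hball_phi x hx).ne').differentiableAt
    · exact (hu0 x (hnotball x hx)).differentiableAt_iff.mpr (differentiableAt_const 0)
  have hu_cd : ContDiff ℝ 1 u := by
    rw [contDiff_iff_contDiffAt]
    intro x
    by_cases hx : x ∈ Metric.ball (0 : E2) 1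
    · exact (ContDiffAt.div (hζ.contDiffAt.pow 2) (contDiff_phi p).contDiffAt
        (hball_phi x hx).ne').of_le (by exact_mod_cast le_top)
    · exact (contDiffAt_const (c := 0)).congr_of_eventuallyEq (hu0 x (hnotball x hx))
  have hcsu : HasCompactSupport u := by
    apply hcsζ.mono
    intro x hx
    simp only [Function.mem_support, hu_def] at hx ⊢
    intro h0
    exact hx (by simp [h0])
  -- continuity facts
  have hucont : Continuous u := hu_diff.continuous
  have hu_fd_cont : ∀ i : Fin 2,
      Continuous fun x : E2 => fderiv ℝ u x (EuclideanSpace.single i 1) :=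
    fun i => (hu_cd.continuous_fderiv (by simp)).clm_apply continuous_const
  have hζ_fd_cont : ∀ i : Fin 2,
      Continuous fun x : E2 => fderiv ℝ ζ x (EuclideanSpace.single i 1) :=
    fun i => (hζ.continuous_fderiv (by simp)).clm_apply continuous_const
  have hP_fd_cont : ∀ i : Fin 2,
      Continuous fun x : E2 => fderiv ℝ (P p i) x (EuclideanSpace.single i 1) := by
    intro i
    simp only [fderiv_P_single]
    apply Continuous.add
    · exact continuous_const.mul (continuous_G1q p)
    · exact (continuous_const.mul (EuclideanSpace.proj i : E2 →L[ℝ] ℝ).continuous).mul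
        ((continuous_G2q p).mul
          (continuous_const.mul (EuclideanSpace.proj i : E2 →L[ℝ] ℝ).continuous))
  -- integrability
  have hA : ∀ i : Fin 2, Integrable
      (fun x : E2 => P p i x * fderiv ℝ u x (EuclideanSpace.single i 1)) := by
    intro i
    apply Continuous.integrable_of_hasCompactSupport
      ((continuous_P p i).mul (hu_fd_cont i))
    exact (hcsu.fderiv_apply ℝ (EuclideanSpace.single i 1)).mul_left
  have hB : ∀ i : Fin 2, Integrable
      (fun x : E2 => fderiv ℝ (P p i) x (EuclideanSpace.single i 1) * u x) := by
    intro i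
    apply Continuous.integrable_of_hasCompactSupport ((hP_fd_cont i).mul hucont)
    exact hcsu.mul_left
  have hC : ∀ i : Fin 2, Integrable (fun x : E2 => P p i x * u x) := by
    intro i
    apply Continuous.integrable_of_hasCompactSupport ((continuous_P p i).mul hucont)
    exact hcsu.mul_left
  have hSq : ∀ i : Fin 2, Integrable
      (fun x : E2 => (fderiv ℝ ζ x (EuclideanSpace.single i 1)) ^ 2) := by
    intro i
    apply Continuous.integrable_of_hasCompactSupport ((hζ_fd_cont i).pow 2)
    exact ((hcsζ.fderiv_apply ℝ (EuclideanSpace.single i 1)).comp_left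
      (g := fun t : ℝ => t ^ 2) (by simp) : _)
  -- integration by parts
  have hIBP : ∀ i : Fin 2,
      ∫ x : E2, P p i x * fderiv ℝ u x (EuclideanSpace.single i 1)
        = - ∫ x : E2, fderiv ℝ (P p i) x (EuclideanSpace.single i 1) * u x :=
    fun i => integral_mul_fderiv_eq_neg_fderiv_mul_of_integrable
      (hB i) (hA i) (hC i) (fun x _ => differentiable_P p i x) (fun x _ => hu_diff x)
  -- weight rewrite: statement weight equals the abstract one
  have hW : ∀ x : E2, (2 * (k : ℝ) ^ 2 * ‖x‖ ^ (k - 2) / (1 + ‖x‖ ^ k) ^ 2) * (ζ x) ^ 2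
      = ∑ i : Fin 2, -(fderiv ℝ (P p i) x (EuclideanSpace.single i 1)) * u x := by
    intro x
    have h1 : ‖x‖ ^ k = q x ^ (p + 1) := by
      rw [hk2, q_eq_norm, show 2 * p + 2 = 2 * (p + 1) by ring, pow_mul]
    have h2 : ‖x‖ ^ (k - 2) = q x ^ p := by
      rw [hk2, q_eq_norm, show 2 * p + 2 - 2 = 2 * p by omega, pow_mul]
    have h3 : phi p x * u x = ζ x ^ 2 := by
      by_cases hφ : phi p x = 0
      · have hxball : x ∉ Metric.ball (0 : E2) 1 := fun h => (hball_phi x h).ne' hφ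
        have : ζ x = 0 := image_eq_zero_of_notMem_tsupport (hnotball x hxball)
        simp [hu_def, this, hφ]
      · simp only [hu_def]; field_simp
    have h4 := sum_fderiv_P p x
    rw [Fin.sum_univ_two] at h4
    have hkr : (k : ℝ) = 2 * (p : ℝ) + 2 := by rw [hk2]; push_cast; ring
    rw [Fin.sum_univ_two, h1, h2, hkr]
    have hden : ((1:ℝ) + q x ^ (p + 1)) ^ 2 ≠ 0 :=
      pow_ne_zero 2 (one_add_pow_pos p (q_nonneg x)).ne'
    linear_combination (u x) * h4
      + (-(8 * ((p : ℝ) + 1) ^ 2 * q x ^ p / (1 + q x ^ (p + 1)) ^ 2)) * h3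
  -- outside-ball vanishing
  have hvan1 : ∀ x : E2, x ∉ Metric.ball (0 : E2) 1 →
      (2 * (k : ℝ) ^ 2 * ‖x‖ ^ (k - 2) / (1 + ‖x‖ ^ k) ^ 2) * (ζ x) ^ 2 = 0 := by
    intro x hx
    have : ζ x = 0 := image_eq_zero_of_notMem_tsupport (hnotball x hx)
    simp [this]
  have hvan2 : ∀ x : E2, x ∉ Metric.ball (0 : E2) 1 →
      ∑ i : Fin 2, (fderiv ℝ ζ x (EuclideanSpace.single i 1)) ^ 2 = 0 := by
    intro x hx
    have : fderiv ℝ ζ x = 0 := fderiv_of_notMem_tsupport ℝ (hnotball x hx)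
    simp [this]
  -- pointwise inequality
  have hpoint : ∀ x : E2,
      ∑ i : Fin 2, P p i x * fderiv ℝ u x (EuclideanSpace.single i 1)
        ≤ ∑ i : Fin 2, (fderiv ℝ ζ x (EuclideanSpace.single i 1)) ^ 2 := by
    intro x
    by_cases hx : x ∈ Metric.ball (0 : E2) 1
    · have hφ : 0 < phi p x := hball_phi x hx
      have hfd := (hu_ball x hφ.ne').fderiv
      apply Finset.sum_le_sum
      intro i _
      rw [hfd]
      simp only [ContinuousLinearMap.add_apply, ContinuousLinearMap.smul_apply,
        smul_eq_mul]
      rw [L_apply_single]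
      set z := ζ x with hz
      set zi := fderiv ℝ ζ x (EuclideanSpace.single i 1) with hzi
      set w := phi p x with hw
      set b := G1 p (q x) * (2 * x i) with hb
      have hP : P p i x = b := rfl
      rw [hP]
      have key : b * (z ^ 2 * (-(w ^ 2)⁻¹ * (G1 p (q x) * (2 * x i)))
            + w⁻¹ * (↑2 * z ^ (2 - 1) * zi))
          = (2 * z * zi * b * w - z ^ 2 * b ^ 2) / w ^ 2 := by
        rw [← hb]
        field_simp
        ring
      rw [key, div_le_iff₀ (by positivity)]
      nlinarith [sq_nonneg (zi * w - z * b)]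
    · have hfd : fderiv ℝ u x = 0 := by
        rw [(hu0 x (hnotball x hx)).fderiv_eq]
        exact fderiv_const_apply 0
      rw [hfd]
      simp only [ContinuousLinearMap.zero_apply, mul_zero, Finset.sum_const_zero]
      exact Finset.sum_nonneg fun i _ => sq_nonneg _
  -- assemble
  rw [setIntegral_eq_integral_of_forall_compl_eq_zero hvan1,
    setIntegral_eq_integral_of_forall_compl_eq_zero hvan2]
  have step1 : ∫ x : E2, (2 * (k : ℝ) ^ 2 * ‖x‖ ^ (k - 2) / (1 + ‖x‖ ^ k) ^ 2) * (ζ x) ^ 2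
      = ∑ i : Fin 2, ∫ x : E2, -(fderiv ℝ (P p i) x (EuclideanSpace.single i 1)) * u x := by
    rw [← integral_finset_sum _ (fun i _ => ((hB i).neg.congr (by
      filter_upwards with x
      simp only [Pi.neg_apply]
      ring)))]
    exact integral_congr_ae (Filter.Eventually.of_forall hW)
  have step2 : ∀ i : Fin 2,
      ∫ x : E2, -(fderiv ℝ (P p i) x (EuclideanSpace.single i 1)) * u x
        = ∫ x : E2, P p i x * fderiv ℝ u x (EuclideanSpace.single i 1) := by
    intro i
    rw [hIBP i, ← integral_neg]
    congr 1
    ext x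
    ring
  have step3 : ∫ x : E2, (2 * (k : ℝ) ^ 2 * ‖x‖ ^ (k - 2) / (1 + ‖x‖ ^ k) ^ 2) * (ζ x) ^ 2
      = ∫ x : E2, ∑ i : Fin 2, P p i x * fderiv ℝ u x (EuclideanSpace.single i 1) := by
    rw [step1, Finset.sum_congr rfl fun i _ => step2 i, ← integral_finset_sum _ fun i _ => hA i]
  rw [ge_iff_le, step3]
  apply integral_mono (integrable_finset_sum _ fun i _ => hA i)
    (integrable_finset_sum _ fun i _ => hSq i) hpoint

end LdGStmt11
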